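/- Let n ≥ 1 be an integer and let h : {0,1,…,n} → ℝ satisfy h(0) = 0, h(n) = 1, and, for every integer k with 1 ≤ k ≤ n−1, (3·(k/n)·(1−k/n)² + 3·(1−k/n)·(k/n)²)·h(k) = 3·(1−k/n)·(k/n)²·h(k+1) + 3·(k/n)·(1−k/n)²·h(k−1). Then for every integer R₀ with 0 ≤ R₀ ≤ n, h(R₀) = (1/2)^(n−1) · ∑_{j=1}^{R₀} C(n−1, j−1), where C(a,b) denotes the binomial coefficient. -/

import Mathlib

theorem urn_absorption_probability
    (n : ℕ) (hn : 1 ≤ n) (h : ℕ → ℝ)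
    (h0 : h 0 = 0) (hN : h n = 1)
    (hrec : ∀ k : ℕ, 1 ≤ k → k ≤ n - 1 →
      (3 * ((k : ℝ) / n) * (1 - (k : ℝ) / n) ^ 2
        + 3 * (1 - (k : ℝ) / n) * ((k : ℝ) / n) ^ 2) * h k
      = 3 * (1 - (k : ℝ) / n) * ((k : ℝ) / n) ^ 2 * h (k + 1)
        + 3 * ((k : ℝ) / n) * (1 - (k : ℝ) / n) ^ 2 * h (k - 1)) :
    ∀ R0 : ℕ, R0 ≤ n →
      h R0 = (1 / 2 : ℝ) ^ (n - 1) *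
        ∑ j ∈ Finset.Icc 1 R0, ((n - 1).choose (j - 1) : ℝ) := by
  have hn0 : (n:ℝ) ≠ 0 := Nat.cast_ne_zero.mpr (by omega)
  -- main claim: h k = h 1 * partial sum
  have main : ∀ k, k ≤ n →
      h k = h 1 * ∑ j ∈ Finset.Icc 1 k, ((n - 1).choose (j - 1) : ℝ) := by
    have step : ∀ k : ℕ,
        (k ≤ n → h k = h 1 * ∑ j ∈ Finset.Icc 1 k, ((n - 1).choose (j - 1) : ℝ)) ∧
        (k + 1 ≤ n → h (k+1) = h 1 * ∑ j ∈ Finset.Icc 1 (k+1), ((n - 1).choose (j - 1) : ℝ)) := by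
      intro k
      induction k with
      | zero =>
        constructor
        · intro _; simp [h0]
        · intro _; simp
      | succ k ih =>
        refine ⟨ih.2, ?_⟩
        intro hk2
        have hA : h k = h 1 * ∑ j ∈ Finset.Icc 1 k, ((n - 1).choose (j - 1) : ℝ) :=
          ih.1 (by omega)
        have hB : h (k+1) = h 1 * ∑ j ∈ Finset.Icc 1 (k+1), ((n - 1).choose (j - 1) : ℝ) :=
          ih.2 (by omega)
        have E := hrec (k+1) (by omega) (by omega)
        simp only [Nat.add_sub_cancel] at E
        push_cast at E
        have hkp : ((k:ℝ)+1) ≠ 0 := by positivity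
        have hnk : (n:ℝ) - ((k:ℝ)+1) ≠ 0 := by
          have : ((k:ℝ)+1) < n := by exact_mod_cast (by omega : k+1 < n)
          linarith
        have e2 : (n:ℝ) * h (k+1) = ((k:ℝ)+1) * h (k+2) + ((n:ℝ)-((k:ℝ)+1)) * h k := by
          field_simp at E
          have h3 : (3*((k:ℝ)+1)*((n:ℝ)-((k:ℝ)+1))) ≠ 0 := by
            intro hc; apply hnk; nlinarith [hkp]
          apply mul_left_cancel₀ h3
          linear_combination (3*((k:ℝ)+1)*((n:ℝ)-((k:ℝ)+1))) * E
        -- binomial identity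
        have hch : ((k:ℝ)+1) * ((n-1).choose (k+1) : ℝ)
            = ((n:ℝ)-((k:ℝ)+1)) * ((n-1).choose k : ℝ) := by
          have hc := Nat.choose_succ_right_eq (n-1) k
          have hcast : (((n-1 : ℕ) - k : ℕ) : ℝ) = (n:ℝ) - ((k:ℝ)+1) := by
            have : (n-1 : ℕ) - k = n - (k+1) := by omega
            rw [this]
            push_cast [Nat.cast_sub (by omega : k+1 ≤ n)]
            ring
          have := congrArg (Nat.cast : ℕ → ℝ) hc
          push_cast at this
          rw [← hcast]
          linarith [this]
        -- sums
        have hs1 : ∑ j ∈ Finset.Icc 1 (k+1), ((n - 1).choose (j - 1) : ℝ)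
            = (∑ j ∈ Finset.Icc 1 k, ((n - 1).choose (j - 1) : ℝ)) + ((n-1).choose k : ℝ) := by
          rw [Finset.sum_Icc_succ_top (by omega : 1 ≤ k+1)]
          simp
        have hs2 : ∑ j ∈ Finset.Icc 1 (k+2), ((n - 1).choose (j - 1) : ℝ)
            = (∑ j ∈ Finset.Icc 1 (k+1), ((n - 1).choose (j - 1) : ℝ)) + ((n-1).choose (k+1) : ℝ) := by
          rw [Finset.sum_Icc_succ_top (by omega : 1 ≤ k+2)]
          simp
        rw [hA, hB] at e2
        simp only [show k + 1 + 1 = k + 2 from rfl]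
        apply mul_left_cancel₀ hkp
        rw [hs2, hs1]
        linear_combination (-1 : ℝ) * e2 + (n:ℝ) * h 1 * hs1 - h 1 * hch
    intro k hk
    exact (step k).1 hk
  -- total sum = 2^(n-1)
  have hsum : ∑ j ∈ Finset.Icc 1 n, ((n - 1).choose (j - 1) : ℝ) = 2 ^ (n-1) := by
    have hmap : Finset.Icc 1 n = Finset.map ⟨fun i => i + 1, add_left_injective 1⟩ (Finset.range n) := by
      ext x
      simp only [Finset.mem_Icc, Finset.mem_map, Finset.mem_range, Function.Embedding.coeFn_mk]
      constructor
      · intro hx; exact ⟨x - 1, by omega, by omega⟩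
      · rintro ⟨a, ha, rfl⟩; omega
    rw [hmap, Finset.sum_map]
    simp only [Function.Embedding.coeFn_mk, Nat.add_sub_cancel]
    have hr : n - 1 + 1 = n := by omega
    have h2 := Nat.sum_range_choose (n-1)
    rw [hr] at h2
    calc ∑ i ∈ Finset.range n, ((n-1).choose i : ℝ)
        = ((∑ i ∈ Finset.range n, (n-1).choose i : ℕ) : ℝ) := by push_cast; rfl
      _ = 2 ^ (n-1) := by rw [h2]; push_cast; rfl
  -- h 1 = (1/2)^(n-1)
  have h1v : h 1 = (1/2 : ℝ) ^ (n-1) := by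
    have := main n le_rfl
    rw [hN, hsum] at this
    have h2 : (2:ℝ) ^ (n-1) ≠ 0 := by positivity
    field_simp at this ⊢
    rw [div_pow, one_pow, eq_div_iff h2]
    linarith [this]
  intro R0 hR0
  rw [main R0 hR0, h1v]
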